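/- For all n ∈ ℕ and all 0 ≤ i, j ≤ n, there is a bijection f from Q^I_{i,j} onto P^{L_n}_{i,j} such that for every α ∈ Q^I_{i,j}, the weight of the path f(α) equals ∏_{r=j}^{i−1} t_{r+1, α_{i−r}}. -/

import Mathlib

/-- The heights of an `L^m_n`-path of order `n` (the abscissas `x i = m + i` are
determined, so only the heights `y i ∈ {0, …, n}`, encoded as `Fin (n+1)`, are recorded):
`y (k+1) ∈ {y k, y k - 1}` and a fall step at position `k` forces `y k ≥ n - k`. -/
def IsLPath (n : ℕ) (y : Fin (n + 1) → Fin (n + 1)) : Prop :=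
  ∀ k : Fin n,
    ((y k.succ = y k.castSucc ∨ (y k.succ : ℕ) + 1 = (y k.castSucc : ℕ)) ∧
      ((y k.succ : ℕ) + 1 = (y k.castSucc : ℕ) → n - (k : ℕ) ≤ (y k.castSucc : ℕ)))

/-- The weight of an `L`-type path: a fall step from `(k, j)` to `(k+1, j-1)` has weight
`t j (k + j - n)` and a horizontal step has weight `1`; the weight of the path is the
product of the weights of its steps. -/
def lweight {R : Type*} [CommRing R] (n : ℕ) (t : ℕ → ℕ → R)
    (y : Fin (n + 1) → Fin (n + 1)) : R :=
  ∏ k : Fin n,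
    if (y k.succ : ℕ) + 1 = (y k.castSucc : ℕ)
    then t (y k.castSucc : ℕ) ((k : ℕ) + (y k.castSucc : ℕ) - n) else 1

open scoped Classical in
/-- `Q^I_{i,j}`: for `i ≥ j`, the weakly increasing sequences `α₁ ≤ … ≤ α_{i-j}` of
nonnegative integers with `αᵣ ≤ i - r` (here zero-indexed, so `α k ≤ i - (k+1)`; the
values are encoded in `Fin (i+1)`); for `i = j` only the empty sequence, and for `i < j`
the empty set. -/
noncomputable def QIset (i j : ℕ) : Finset (Fin (i - j) → Fin (i + 1)) :=
  if j ≤ i then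
    Finset.univ.filter
      (fun α => Monotone α ∧ ∀ r : Fin (i - j), (α r : ℕ) ≤ i - ((r : ℕ) + 1))
  else ∅

namespace Stmt8Aux
open Finset

lemma card_filter_val_lt {d : ℕ} (E : ℕ) (hE : E ≤ d) :
    ((univ : Finset (Fin d)).filter (fun q : Fin d => (q : ℕ) < E)).card = E := by
  have h := Finset.card_bij (s := (univ : Finset (Fin d)).filter (fun q : Fin d => (q : ℕ) < E))
    (t := Finset.range E) (fun q _ => (q : ℕ))
    (by intro a ha; simp at ha ⊢; exact ha)
    (by intro a _ b _ hab; exact Fin.ext hab)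
    (by intro b hb; simp at hb; exact ⟨⟨b, lt_of_lt_of_le hb hE⟩, by simp [hb], rfl⟩)
  simpa using h

def kf (n i : ℕ) {d : ℕ} (α : Fin d → Fin (i + 1)) (q : Fin d) : ℕ :=
  n - i + (q : ℕ) + (α q : ℕ)

def cf (n i : ℕ) {d : ℕ} (α : Fin d → Fin (i + 1)) (m : ℕ) : ℕ :=
  ((univ : Finset (Fin d)).filter (fun q => kf n i α q < m)).card

variable {n i d : ℕ} {α : Fin d → Fin (i + 1)}

lemma kf_lt (hin : i ≤ n) (hb : ∀ q : Fin d, (α q : ℕ) + (q : ℕ) + 1 ≤ i) (q : Fin d) :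
    kf n i α q < n := by
  have := hb q; unfold kf; omega

lemma kf_strictMono (hm : Monotone α) : StrictMono (kf n i α) := by
  intro q q' h
  have h1 : (α q : ℕ) ≤ (α q' : ℕ) := hm h.le
  have h2 : (q : ℕ) < (q' : ℕ) := h
  unfold kf; omega

lemma cf_kf (hm : Monotone α) (q : Fin d) : cf n i α (kf n i α q) = (q : ℕ) := by
  unfold cf
  rw [Finset.filter_congr (q := fun q' : Fin d => (q' : ℕ) < (q : ℕ))
    (fun q' _ => by rw [(kf_strictMono hm).lt_iff_lt, Fin.lt_iff_val_lt_val])]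
  exact card_filter_val_lt _ q.isLt.le

lemma cf_kf_succ (hm : Monotone α) (q : Fin d) :
    cf n i α (kf n i α q + 1) = (q : ℕ) + 1 := by
  unfold cf
  rw [Finset.filter_congr (q := fun q' : Fin d => (q' : ℕ) < (q : ℕ) + 1)
    (fun q' _ => by
      simp only [Nat.lt_succ_iff]
      rw [(kf_strictMono hm).le_iff_le, Fin.le_iff_val_le_val])]
  exact card_filter_val_lt _ q.isLt

lemma cf_succ_eq {m : ℕ} (hnot : ∀ q, kf n i α q ≠ m) :
    cf n i α (m + 1) = cf n i α m := by
  unfold cf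
  rw [Finset.filter_congr (q := fun q : Fin d => kf n i α q < m)
    (fun q _ => by have := hnot q; omega)]

lemma cf_le (m : ℕ) : cf n i α m ≤ d :=
  (Finset.card_filter_le _ _).trans (by simp)

lemma cf_mono {m m' : ℕ} (h : m ≤ m') : cf n i α m ≤ cf n i α m' := by
  apply Finset.card_le_card
  intro q hq
  simp only [Finset.mem_filter] at hq ⊢
  exact ⟨hq.1, lt_of_lt_of_le hq.2 h⟩

lemma cf_zero : cf n i α 0 = 0 := by simp [cf]

lemma cf_top (hin : i ≤ n) (hb : ∀ q : Fin d, (α q : ℕ) + (q : ℕ) + 1 ≤ i) :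
    cf n i α n = d := by
  unfold cf
  rw [Finset.filter_true_of_mem (fun q _ => kf_lt hin hb q)]
  simp

def pathOf (n i : ℕ) (hin : i ≤ n) {d : ℕ} (α : Fin d → Fin (i + 1)) :
    Fin (n + 1) → Fin (n + 1) :=
  fun m => ⟨i - cf n i α (m : ℕ), by omega⟩


variable {n i d : ℕ} {α : Fin d → Fin (i + 1)}

lemma pathOf_isLPath (hin : i ≤ n) (hb : ∀ q : Fin d, (α q : ℕ) + (q : ℕ) + 1 ≤ i)
    (hm : Monotone α) : IsLPath n (pathOf n i hin α) := by
  intro k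
  have hs : (pathOf n i hin α k.succ : ℕ) = i - cf n i α ((k : ℕ) + 1) := by
    simp [pathOf]
  have hc : (pathOf n i hin α k.castSucc : ℕ) = i - cf n i α (k : ℕ) := by
    simp [pathOf]
  by_cases hq : ∃ q, kf n i α q = (k : ℕ)
  · obtain ⟨q, hq⟩ := hq
    have h1 : cf n i α (k : ℕ) = (q : ℕ) := by rw [← hq]; exact cf_kf hm q
    have h2 : cf n i α ((k : ℕ) + 1) = (q : ℕ) + 1 := by rw [← hq]; exact cf_kf_succ hm q
    have hbq := hb q
    constructor
    · right; rw [hs, hc, h1, h2]; omega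
    · intro _
      rw [hc, h1]
      have : (k : ℕ) = n - i + (q : ℕ) + (α q : ℕ) := hq.symm
      omega
  · push_neg at hq
    have h2 : cf n i α ((k : ℕ) + 1) = cf n i α (k : ℕ) := cf_succ_eq hq
    constructor
    · left
      apply Fin.ext
      rw [hs, hc, h2]
    · intro habs
      rw [hs, hc, h2] at habs
      omega

lemma pathOf_zero (hin : i ≤ n) : (pathOf n i hin α 0 : ℕ) = i := by
  have : ((0 : Fin (n + 1)) : ℕ) = 0 := rfl
  simp [pathOf, this, cf_zero]

lemma pathOf_last (hin : i ≤ n) (hb : ∀ q : Fin d, (α q : ℕ) + (q : ℕ) + 1 ≤ i) :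
    (pathOf n i hin α (Fin.last n) : ℕ) = i - d := by
  simp [pathOf, Fin.val_last, cf_top hin hb]

lemma lweight_pathOf {R : Type*} [CommRing R] (t : ℕ → ℕ → R)
    (hin : i ≤ n) (hb : ∀ q : Fin d, (α q : ℕ) + (q : ℕ) + 1 ≤ i) (hm : Monotone α) :
    lweight n t (pathOf n i hin α) = ∏ q : Fin d, t (i - (q : ℕ)) (α q : ℕ) := by
  classical
  set F : Fin n → R := fun k =>
    if (pathOf n i hin α k.succ : ℕ) + 1 = (pathOf n i hin α k.castSucc : ℕ)
    then t (pathOf n i hin α k.castSucc : ℕ)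
      ((k : ℕ) + (pathOf n i hin α k.castSucc : ℕ) - n) else 1 with hF
  have hval : ∀ k : Fin n, (pathOf n i hin α k.succ : ℕ) = i - cf n i α ((k : ℕ) + 1)
      ∧ (pathOf n i hin α k.castSucc : ℕ) = i - cf n i α (k : ℕ) := by
    intro k; constructor <;> simp [pathOf]
  set e : Fin d → Fin n := fun q => ⟨kf n i α q, kf_lt hin hb q⟩ with he
  have hinj : Function.Injective e := by
    intro a b hab
    exact (kf_strictMono hm).injective (by simpa [he] using congrArg Fin.val hab)
  have hoff : ∀ k ∈ (univ : Finset (Fin n)), k ∉ Finset.image e univ → F k = 1 := by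
    intro k _ hk
    have hq : ∀ q, kf n i α q ≠ (k : ℕ) := by
      intro q hq
      exact hk (Finset.mem_image.2 ⟨q, Finset.mem_univ q, Fin.ext hq⟩)
    have h2 := cf_succ_eq hq
    rw [hF]
    apply if_neg
    rw [(hval k).1, (hval k).2, h2]
    omega
  have h1 : lweight n t (pathOf n i hin α) = ∏ k ∈ Finset.image e univ, F k := by
    rw [lweight]
    exact (Finset.prod_subset (Finset.subset_univ _) hoff).symm
  rw [h1, Finset.prod_image (fun a _ b _ h => hinj h)]
  apply Finset.prod_congr rfl
  intro q _
  have hv1 : (pathOf n i hin α (e q).succ : ℕ) = i - ((q : ℕ) + 1) := by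
    rw [(hval (e q)).1]
    have : ((e q : Fin n) : ℕ) = kf n i α q := rfl
    rw [this, cf_kf_succ hm]
  have hv2 : (pathOf n i hin α (e q).castSucc : ℕ) = i - (q : ℕ) := by
    rw [(hval (e q)).2]
    have : ((e q : Fin n) : ℕ) = kf n i α q := rfl
    rw [this, cf_kf hm]
  have hbq := hb q
  rw [hF]
  simp only []
  rw [if_pos (by rw [hv1, hv2]; omega), hv2]
  congr 1
  rw [show ((e q : Fin n) : ℕ) = n - i + (q : ℕ) + (α q : ℕ) from rfl]
  omega


def yv (n : ℕ) (y : Fin (n + 1) → Fin (n + 1)) (m : ℕ) : ℕ :=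
  (y ⟨min m n, by omega⟩ : ℕ)

variable {y : Fin (n + 1) → Fin (n + 1)}

lemma yv_eq (m : ℕ) (h : m ≤ n) : yv n y m = (y ⟨m, by omega⟩ : ℕ) := by
  have e : (⟨min m n, by omega⟩ : Fin (n + 1)) = ⟨m, by omega⟩ :=
    Fin.ext (by simp [Nat.min_eq_left h])
  rw [yv, e]

lemma yv_stable (m : ℕ) (h : n ≤ m) : yv n y m = yv n y n := by
  unfold yv
  congr 1
  exact Fin.ext (by simp [Nat.min_eq_right h])

lemma yv_step (hy : IsLPath n y) (m : ℕ) (hm : m < n) :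
    (yv n y (m + 1) = yv n y m ∨ yv n y (m + 1) + 1 = yv n y m) ∧
      (yv n y (m + 1) + 1 = yv n y m → n - m ≤ yv n y m) := by
  have h1 := hy ⟨m, hm⟩
  have e1 : (⟨m, hm⟩ : Fin n).succ = (⟨m + 1, by omega⟩ : Fin (n + 1)) := rfl
  have e2 : (⟨m, hm⟩ : Fin n).castSucc = (⟨m, by omega⟩ : Fin (n + 1)) := rfl
  rw [e1, e2] at h1
  rw [yv_eq (m + 1) hm, yv_eq m hm.le]
  refine ⟨?_, h1.2⟩
  rcases h1.1 with h | h
  · left; exact congrArg Fin.val h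
  · right; exact h

lemma yv_antitone (hy : IsLPath n y) : ∀ a b : ℕ, a ≤ b → yv n y b ≤ yv n y a := by
  intro a b hab
  induction b with
  | zero =>
    have : a = 0 := by omega
    rw [this]
  | succ b ih =>
    rcases Nat.lt_or_ge a (b + 1) with h | h
    · have hab' : a ≤ b := by omega
      have h2 : yv n y (b + 1) ≤ yv n y b := by
        rcases Nat.lt_or_ge b n with hb | hb
        · rcases (yv_step hy b hb).1 with h | h <;> omega
        · rw [yv_stable (b + 1) (by omega), yv_stable b hb]
      exact le_trans h2 (ih hab')
    · have : a = b + 1 := by omega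
      rw [this]

lemma yv_lip (hy : IsLPath n y) : ∀ a b : ℕ, a ≤ b → yv n y a ≤ yv n y b + (b - a) := by
  intro a b hab
  induction b with
  | zero =>
    have : a = 0 := by omega
    rw [this]; omega
  | succ b ih =>
    rcases Nat.lt_or_ge a (b + 1) with h | h
    · have hab' : a ≤ b := by omega
      have h2 : yv n y b ≤ yv n y (b + 1) + 1 := by
        rcases Nat.lt_or_ge b n with hb | hb
        · rcases (yv_step hy b hb).1 with h | h <;> omega
        · rw [yv_stable (b + 1) (by omega), yv_stable b hb]; omega
      have := ih hab'
      omega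
    · have : a = b + 1 := by omega
      rw [this]; omega

end Stmt8Aux

/-- There is a bijection `f` from `Q^I_{i,j}` onto `P^{L_n}_{i,j}` (the `L^0_n`-paths
with `y 0 = i` and `y n = j`) under which the weight of the path `f α` equals
`∏_{r=j}^{i-1} t (r+1) (α (i-r))`, the product being reindexed by
`q = i - r - 1 ∈ {0, …, i-j-1}` (zero-indexed), so the factor for `q` is
`t (i - q) (α q)`. -/
theorem stmt8 {R : Type*} [CommRing R] (n : ℕ) (t : ℕ → ℕ → R) (i j : Fin (n + 1)) :
    ∃ f : {α // α ∈ QIset (i : ℕ) (j : ℕ)} ≃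
        {y : Fin (n + 1) → Fin (n + 1) // IsLPath n y ∧ y 0 = i ∧ y (Fin.last n) = j},
      ∀ α, lweight n t (f α).1 =
        ∏ q : Fin ((i : ℕ) - (j : ℕ)), t ((i : ℕ) - (q : ℕ)) (α.1 q : ℕ) := by
  classical
  open Stmt8Aux in
  by_cases hij : (j : ℕ) ≤ (i : ℕ)
  case neg =>
    have hempty1 : IsEmpty {α // α ∈ QIset (i : ℕ) (j : ℕ)} := by
      refine ⟨fun a => ?_⟩
      have h := a.2
      unfold QIset at h
      simp only [if_neg hij] at h
      exact absurd h (Finset.notMem_empty _)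
    have hempty2 : IsEmpty
        {y : Fin (n + 1) → Fin (n + 1) // IsLPath n y ∧ y 0 = i ∧ y (Fin.last n) = j} := by
      refine ⟨fun a => ?_⟩
      obtain ⟨y, hy, h0, hn⟩ := a
      have h1 := Stmt8Aux.yv_antitone hy 0 n (Nat.zero_le n)
      have e0 : Stmt8Aux.yv n y 0 = (i : ℕ) := by
        rw [Stmt8Aux.yv_eq 0 (Nat.zero_le n)]
        have : (⟨0, by omega⟩ : Fin (n + 1)) = 0 := rfl
        rw [this, h0]
      have en : Stmt8Aux.yv n y n = (j : ℕ) := by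
        rw [Stmt8Aux.yv_eq n (le_refl n)]
        have : (⟨n, by omega⟩ : Fin (n + 1)) = Fin.last n := rfl
        rw [this, hn]
      rw [e0, en] at h1
      omega
    exact ⟨Equiv.equivOfIsEmpty _ _, fun a => isEmptyElim a⟩
  case pos =>
    have hin : (i : ℕ) ≤ n := by omega
    have hmem : ∀ a : {α // α ∈ QIset (i : ℕ) (j : ℕ)},
        Monotone a.1 ∧ ∀ q : Fin ((i : ℕ) - (j : ℕ)), (a.1 q : ℕ) + (q : ℕ) + 1 ≤ (i : ℕ) := by
      intro a
      have h := a.2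
      unfold QIset at h
      simp only [if_pos hij, Finset.mem_filter] at h
      refine ⟨h.2.1, fun q => ?_⟩
      have h1 := h.2.2 q
      have hq : (q : ℕ) < (i : ℕ) - (j : ℕ) := q.isLt
      omega
    let F : {α // α ∈ QIset (i : ℕ) (j : ℕ)} →
        {y : Fin (n + 1) → Fin (n + 1) // IsLPath n y ∧ y 0 = i ∧ y (Fin.last n) = j} :=
      fun a => ⟨Stmt8Aux.pathOf n (i : ℕ) hin a.1,
        Stmt8Aux.pathOf_isLPath hin (hmem a).2 (hmem a).1,
        Fin.ext (Stmt8Aux.pathOf_zero hin),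
        Fin.ext (by rw [Stmt8Aux.pathOf_last hin (hmem a).2]; omega)⟩
    have hFinj : Function.Injective F := by
      intro a b hab
      have hcf : ∀ m : ℕ, m ≤ n →
          Stmt8Aux.cf n (i : ℕ) a.1 m = Stmt8Aux.cf n (i : ℕ) b.1 m := by
        intro m hm
        have h1 : Stmt8Aux.pathOf n (i : ℕ) hin a.1 ⟨m, by omega⟩ =
            Stmt8Aux.pathOf n (i : ℕ) hin b.1 ⟨m, by omega⟩ :=
          congrFun (congrArg Subtype.val hab) ⟨m, by omega⟩
        have h2 : (i : ℕ) - Stmt8Aux.cf n (i : ℕ) a.1 m =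
            (i : ℕ) - Stmt8Aux.cf n (i : ℕ) b.1 m := congrArg Fin.val h1
        have h3 : Stmt8Aux.cf n (i : ℕ) a.1 m ≤ (i : ℕ) - (j : ℕ) := Stmt8Aux.cf_le m
        have h4 : Stmt8Aux.cf n (i : ℕ) b.1 m ≤ (i : ℕ) - (j : ℕ) := Stmt8Aux.cf_le m
        omega
      apply Subtype.ext
      funext q
      set m := Stmt8Aux.kf n (i : ℕ) a.1 q with hmdef
      have hmlt : m < n := Stmt8Aux.kf_lt hin (hmem a).2 q
      have ha1 : Stmt8Aux.cf n (i : ℕ) a.1 m = (q : ℕ) := Stmt8Aux.cf_kf (hmem a).1 q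
      have ha2 : Stmt8Aux.cf n (i : ℕ) a.1 (m + 1) = (q : ℕ) + 1 :=
        Stmt8Aux.cf_kf_succ (hmem a).1 q
      have hb1 : Stmt8Aux.cf n (i : ℕ) b.1 m = (q : ℕ) := by
        rw [← hcf m hmlt.le]; exact ha1
      have hb2 : Stmt8Aux.cf n (i : ℕ) b.1 (m + 1) = (q : ℕ) + 1 := by
        rw [← hcf (m + 1) hmlt]; exact ha2
      have hex' : ∃ q', Stmt8Aux.kf n (i : ℕ) b.1 q' = m := by
        by_contra h
        push_neg at h
        rw [Stmt8Aux.cf_succ_eq h] at hb2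
        omega
      obtain ⟨q', hq'⟩ := hex'
      have : Stmt8Aux.cf n (i : ℕ) b.1 m = (q' : ℕ) := by
        rw [← hq']; exact Stmt8Aux.cf_kf (hmem b).1 q'
      have hqq : q' = q := Fin.ext (by omega)
      rw [hqq] at hq'
      have hkk : Stmt8Aux.kf n (i : ℕ) b.1 q = Stmt8Aux.kf n (i : ℕ) a.1 q := hq'
      unfold Stmt8Aux.kf at hkk
      exact Fin.ext (by omega)
    have hFsurj : Function.Surjective F := by
      rintro ⟨y, hy, h0, hn⟩
      have e0 : Stmt8Aux.yv n y 0 = (i : ℕ) := by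
        rw [Stmt8Aux.yv_eq 0 (Nat.zero_le n)]
        have : (⟨0, by omega⟩ : Fin (n + 1)) = 0 := rfl
        rw [this, h0]
      have en : Stmt8Aux.yv n y n = (j : ℕ) := by
        rw [Stmt8Aux.yv_eq n (le_refl n)]
        have : (⟨n, by omega⟩ : Fin (n + 1)) = Fin.last n := rfl
        rw [this, hn]
      have hanti := Stmt8Aux.yv_antitone hy
      have hle_i : ∀ m : ℕ, Stmt8Aux.yv n y m ≤ (i : ℕ) := by
        intro m
        have := hanti 0 m (Nat.zero_le m)
        omega
      have hge_j : ∀ m : ℕ, m ≤ n → (j : ℕ) ≤ Stmt8Aux.yv n y m := by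
        intro m hm
        have := hanti m n hm
        omega
      have hex : ∀ q : Fin ((i : ℕ) - (j : ℕ)),
          ∃ m, Stmt8Aux.yv n y m + (q : ℕ) + 1 ≤ (i : ℕ) := by
        intro q
        refine ⟨n, ?_⟩
        have := q.isLt
        omega
      set M : Fin ((i : ℕ) - (j : ℕ)) → ℕ := fun q => Nat.find (hex q) with hMdef
      have hMspec : ∀ q, Stmt8Aux.yv n y (M q) + (q : ℕ) + 1 ≤ (i : ℕ) :=
        fun q => Nat.find_spec (hex q)
      have hMle : ∀ q, M q ≤ n := by
        intro q
        apply Nat.find_le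
        have := q.isLt
        omega
      have hMpos : ∀ q, 0 < M q := by
        intro q
        rcases Nat.eq_zero_or_pos (M q) with h | h
        · exfalso
          have h2 := hMspec q
          rw [h, e0] at h2
          omega
        · exact h
      have hMmin : ∀ q, ∀ m, m < M q → ¬(Stmt8Aux.yv n y m + (q : ℕ) + 1 ≤ (i : ℕ)) :=
        fun q m hm => Nat.find_min (hex q) hm
      have key : ∀ q : Fin ((i : ℕ) - (j : ℕ)),
          Stmt8Aux.yv n y (M q - 1) + (q : ℕ) = (i : ℕ) ∧
          Stmt8Aux.yv n y (M q) + (q : ℕ) + 1 = (i : ℕ) ∧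
          M q - 1 < n ∧ n - (i : ℕ) + (q : ℕ) ≤ M q - 1 := by
        intro q
        set k := M q - 1 with hkdef
        have hMk : M q = k + 1 := by have := hMpos q; omega
        have h1 : ¬(Stmt8Aux.yv n y k + (q : ℕ) + 1 ≤ (i : ℕ)) :=
          hMmin q k (by omega)
        have h2 := hMspec q
        have hlip := Stmt8Aux.yv_lip hy k (M q) (by omega)
        have hle := hle_i k
        have hyvk : Stmt8Aux.yv n y k + (q : ℕ) = (i : ℕ) := by omega
        have hyvM : Stmt8Aux.yv n y (M q) + (q : ℕ) + 1 = (i : ℕ) := by omega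
        have hkn : k < n := by
          by_contra hkn
          push_neg at hkn
          have hst : Stmt8Aux.yv n y k = Stmt8Aux.yv n y n := Stmt8Aux.yv_stable k hkn
          rw [en] at hst
          have := q.isLt
          omega
        have hfall := Stmt8Aux.yv_step hy k hkn
        have hcase : Stmt8Aux.yv n y (k + 1) + 1 = Stmt8Aux.yv n y k := by
          rcases hfall.1 with h | h
          · exfalso
            rw [← hMk] at h
            omega
          · exact h
        have hcond := hfall.2 hcase
        exact ⟨hyvk, hyvM, hkn, by omega⟩
      set αf : Fin ((i : ℕ) - (j : ℕ)) → Fin ((i : ℕ) + 1) :=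
        fun q => ⟨M q - 1 - (n - (i : ℕ) + (q : ℕ)), by
          have hk := key q
          omega⟩ with hαdef
      have hkf : ∀ q, Stmt8Aux.kf n (i : ℕ) αf q = M q - 1 := by
        intro q
        have hk := key q
        show n - (i : ℕ) + (q : ℕ) + (M q - 1 - (n - (i : ℕ) + (q : ℕ))) = M q - 1
        omega
      have hMmono : ∀ q q' : Fin ((i : ℕ) - (j : ℕ)), (q : ℕ) ≤ (q' : ℕ) → M q ≤ M q' := by
        intro q q' h
        exact Nat.find_mono (fun m hm => by omega)
      have hMsep : ∀ q q' : Fin ((i : ℕ) - (j : ℕ)), (q : ℕ) ≤ (q' : ℕ) →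
          M q + ((q' : ℕ) - (q : ℕ)) ≤ M q' := by
        intro q q' h
        have hlip := Stmt8Aux.yv_lip hy (M q) (M q') (hMmono q q' h)
        have h1 := (key q).2.1
        have h2 := (key q').2.1
        have h3 := hMmono q q' h
        omega
      have hmono : Monotone αf := by
        intro q q' h
        have h' : (q : ℕ) ≤ (q' : ℕ) := h
        have hsep := hMsep q q' h'
        have h1 := key q
        have h2 := key q'
        show (αf q : ℕ) ≤ (αf q' : ℕ)
        show M q - 1 - (n - (i : ℕ) + (q : ℕ)) ≤ M q' - 1 - (n - (i : ℕ) + (q' : ℕ))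
        omega
      have hbd : ∀ q : Fin ((i : ℕ) - (j : ℕ)), (αf q : ℕ) ≤ (i : ℕ) - ((q : ℕ) + 1) := by
        intro q
        have h1 := key q
        show M q - 1 - (n - (i : ℕ) + (q : ℕ)) ≤ (i : ℕ) - ((q : ℕ) + 1)
        omega
      have hmem' : αf ∈ QIset (i : ℕ) (j : ℕ) := by
        unfold QIset
        simp only [if_pos hij, Finset.mem_filter]
        exact ⟨Finset.mem_univ _, hmono, hbd⟩
      refine ⟨⟨αf, hmem'⟩, ?_⟩
      apply Subtype.ext
      funext m
      apply Fin.ext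
      show (i : ℕ) - Stmt8Aux.cf n (i : ℕ) αf (m : ℕ) = (y m : ℕ)
      have hmn : (m : ℕ) ≤ n := by omega
      have hyvm : Stmt8Aux.yv n y (m : ℕ) = (y m : ℕ) := by
        rw [Stmt8Aux.yv_eq (m : ℕ) hmn]
      have hiff : ∀ q : Fin ((i : ℕ) - (j : ℕ)),
          Stmt8Aux.kf n (i : ℕ) αf q < (m : ℕ) ↔
            (q : ℕ) < (i : ℕ) - Stmt8Aux.yv n y (m : ℕ) := by
        intro q
        obtain ⟨k1, k2, k3, k4⟩ := key q
        rw [hkf q]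
        constructor
        · intro h
          have hMm : M q ≤ (m : ℕ) := by have := hMpos q; omega
          have := hanti (M q) (m : ℕ) hMm
          omega
        · intro h
          have hMm : M q ≤ (m : ℕ) := Nat.find_le (by omega)
          have := hMpos q
          omega
      have hcf : Stmt8Aux.cf n (i : ℕ) αf (m : ℕ) =
          (i : ℕ) - Stmt8Aux.yv n y (m : ℕ) := by
        unfold Stmt8Aux.cf
        rw [Finset.filter_congr
          (q := fun q : Fin ((i : ℕ) - (j : ℕ)) =>
            (q : ℕ) < (i : ℕ) - Stmt8Aux.yv n y (m : ℕ))
          (fun q _ => by simpa using hiff q)]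
        apply Stmt8Aux.card_filter_val_lt
        have := hge_j (m : ℕ) hmn
        omega
      rw [hcf, ← hyvm]
      have := hle_i (m : ℕ)
      omega
    refine ⟨Equiv.ofBijective F ⟨hFinj, hFsurj⟩, fun a => ?_⟩
    exact Stmt8Aux.lweight_pathOf t hin (hmem a).2 (hmem a).1
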